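/- For z = (1,...,1) ∈ ℝ^m, the power sum kernel k_z(g,h) = m^{ℓ(g h^{-1})} can be written as a function of the Cayley distance: k_z(g,h) = m^n · exp(-β · d_C(g,h)), where β = log m and d_C is the Cayley distance; in particular the Cayley distance kernel exp(-β d_C(g,h)) with e^β = m a positive integer is positive semidefinite on S_n. -/

import Mathlib

/-- The cycle lengths of a permutation, including fixed points as cycles of length 1. -/
def cycleMu {n : ℕ} (g : Equiv.Perm (Fin n)) : Multiset ℕ :=
  g.cycleType + Multiset.replicate (n - g.cycleType.sum) 1

/-- The power sum kernel `k_z(g,h) = p_{μ(g h⁻¹)}(z) = ∏_j Σ_i z_i^{μ_j}`. -/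
def powerSumKernel {n m : ℕ} (z : Fin m → ℝ) (g h : Equiv.Perm (Fin n)) : ℝ :=
  ((cycleMu (g * h⁻¹)).map (fun d => ∑ i, z i ^ d)).prod

/-- The Cayley graph of `S_n` with respect to the set of all transpositions. -/
def cayleyGraph (n : ℕ) : SimpleGraph (Equiv.Perm (Fin n)) :=
  SimpleGraph.fromRel (fun g h => (g * h⁻¹).IsSwap)

open Equiv Equiv.Perm

namespace PSKaux

variable {n : ℕ}

/-- Number of cycles of `σ`, counting fixed points. -/
def cc (σ : Perm (Fin n)) : ℕ := Multiset.card (cycleMu σ)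

lemma cc_eq (σ : Perm (Fin n)) :
    cc σ = σ.cycleFactorsFinset.card + (n - σ.support.card) := by
  unfold cc cycleMu
  rw [Multiset.card_add, Multiset.card_replicate, sum_cycleType, cycleType_def,
    Multiset.card_map]
  rfl

/-- The setoid whose classes are the cycles (orbits) of `σ`. -/
def scSetoid (σ : Perm (Fin n)) : Setoid (Fin n) :=
  ⟨σ.SameCycle, ⟨SameCycle.refl σ, SameCycle.symm, SameCycle.trans⟩⟩

/-- The set of cycles (orbits) of `σ`. -/
def Q (σ : Perm (Fin n)) : Type := Quotient (scSetoid σ)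

instance instFintypeQ (σ : Perm (Fin n)) : Fintype (Q σ) :=
  @Quotient.fintype _ _ (scSetoid σ) fun x y => inferInstanceAs (Decidable (σ.SameCycle x y))

instance (σ : Perm (Fin n)) : DecidableEq (Q σ) :=
  @Quotient.decidableEq _ (scSetoid σ) fun x y => inferInstanceAs (Decidable (σ.SameCycle x y))

lemma sameCycle_fixed {σ : Perm (Fin n)} {x y : Fin n} (h : σ.SameCycle x y)
    (hx : σ x = x) : y = x := by
  obtain ⟨i, rfl⟩ := h
  exact zpow_apply_eq_self_of_apply_eq_self hx i

def toSum (σ : Perm (Fin n)) (x : Fin n) :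
    {x : Fin n // σ x = x} ⊕ {c : Perm (Fin n) // c ∈ σ.cycleFactorsFinset} :=
  if h : σ x = x then Sum.inl ⟨x, h⟩
  else Sum.inr ⟨σ.cycleOf x, cycleOf_mem_cycleFactorsFinset_iff.2 (mem_support.2 h)⟩

lemma toSum_respects (σ : Perm (Fin n)) {x y : Fin n} (h : σ.SameCycle x y) :
    toSum σ x = toSum σ y := by
  unfold toSum
  by_cases hx : σ x = x
  · have : y = x := sameCycle_fixed h hx
    subst this; rfl
  · have hy : σ y ≠ y := fun hy' => hx (by rw [sameCycle_fixed h.symm hy']; exact hy')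
    rw [dif_neg hx, dif_neg hy]
    exact congrArg _ (Subtype.ext (SameCycle.cycleOf_eq h))

/-- Orbit-counting bijection. -/
noncomputable def Qequiv (σ : Perm (Fin n)) :
    Q σ ≃ ({x : Fin n // σ x = x} ⊕ {c : Perm (Fin n) // c ∈ σ.cycleFactorsFinset}) := by
  refine Equiv.ofBijective (Quotient.lift (toSum σ) fun x y h => toSum_respects σ h) ⟨?_, ?_⟩
  · refine Quotient.ind fun x => Quotient.ind fun y hxy => Quotient.sound ?_
    have hxy' : toSum σ x = toSum σ y := hxy
    unfold toSum at hxy'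
    by_cases hx : σ x = x <;> by_cases hy : σ y = y
    · rw [dif_pos hx, dif_pos hy] at hxy'
      simp only [Sum.inl.injEq, Subtype.mk.injEq] at hxy'
      subst hxy'; exact SameCycle.refl σ x
    · rw [dif_pos hx, dif_neg hy] at hxy'; simp at hxy'
    · rw [dif_neg hx, dif_pos hy] at hxy'; simp at hxy'
    · rw [dif_neg hx, dif_neg hy] at hxy'
      simp only [Sum.inr.injEq, Subtype.mk.injEq] at hxy'
      have hy' : y ∈ (σ.cycleOf y).support :=
        mem_support_cycleOf_iff.2 ⟨SameCycle.refl σ y, mem_support.2 hy⟩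
      rw [← hxy'] at hy'
      exact (mem_support_cycleOf_iff.1 hy').1
  · rintro (⟨x, hx⟩ | ⟨c, hc⟩)
    · exact ⟨Quotient.mk (scSetoid σ) x, by simp [toSum, hx]⟩
    · obtain ⟨x, hx⟩ := (mem_cycleFactorsFinset_iff.1 hc).1.nonempty_support
      have hxs : σ x ≠ x := by
        have := (mem_cycleFactorsFinset_iff.1 hc).2 x hx
        rw [← this]; exact mem_support.1 hx
      refine ⟨Quotient.mk (scSetoid σ) x, ?_⟩
      show toSum σ x = _
      unfold toSum
      rw [dif_neg hxs]
      exact congrArg _ (Subtype.ext (cycle_is_cycleOf hx hc).symm)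

lemma card_Q (σ : Perm (Fin n)) : Fintype.card (Q σ) = cc σ := by
  rw [Fintype.card_congr (Qequiv σ), Fintype.card_sum, cc_eq]
  have h0 : Fintype.card {x : Fin n // x ∈ σ.support} = σ.support.card := Fintype.card_coe _
  have h2 : Fintype.card {x : Fin n // ¬ x ∈ σ.support} =
      Fintype.card (Fin n) - Fintype.card {x : Fin n // x ∈ σ.support} :=
    Fintype.card_subtype_compl _
  have h1 : Fintype.card {x : Fin n // σ x = x} = Fintype.card {x : Fin n // ¬ x ∈ σ.support} :=
    Fintype.card_congr (Equiv.subtypeEquivRight fun x => by simp [notMem_support]).symm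
  have h3 : Fintype.card {c : Perm (Fin n) // c ∈ σ.cycleFactorsFinset} =
      σ.cycleFactorsFinset.card := Fintype.card_coe _
  rw [Fintype.card_fin] at h2
  omega

lemma cc_le (σ : Perm (Fin n)) : cc σ ≤ n := by
  have hs : Function.Surjective (fun x => (Quotient.mk (scSetoid σ) x : Q σ)) := fun q =>
    Quotient.exists_rep q
  have := @Fintype.card_le_of_surjective (Fin n) (Q σ) _ (instFintypeQ σ) _ hs
  rw [card_Q, Fintype.card_fin] at this
  exact this


lemma fix_zpow {α : Type*} {σ : Perm (Fin n)} {F : Fin n → α} (hF : ∀ x, F (σ x) = F x) :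
    ∀ (i : ℤ) (x : Fin n), F ((σ ^ i) x) = F x := by
  have hnat : ∀ (k : ℕ) (x : Fin n), F ((σ ^ k) x) = F x := by
    intro k
    induction k with
    | zero => intro x; simp
    | succ k ih =>
      intro x
      rw [pow_succ', Perm.mul_apply, hF, ih]
  intro i x
  cases i with
  | ofNat k => rw [Int.ofNat_eq_coe, zpow_natCast]; exact hnat k x
  | negSucc k =>
    rw [zpow_negSucc]
    have := hnat (k + 1) ((σ ^ (k + 1))⁻¹ x)
    rw [Perm.coe_inv, Equiv.apply_symm_apply] at this
    exact this.symm

lemma sameCycle_const {α : Type*} {σ : Perm (Fin n)} {F : Fin n → α}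
    (hF : ∀ x, F (σ x) = F x) {x y : Fin n} (h : σ.SameCycle x y) : F x = F y := by
  obtain ⟨i, rfl⟩ := h
  exact (fix_zpow hF i x).symm

/-- Functions invariant under `σ` are functions on the set of cycles. -/
def fixEquiv (σ : Perm (Fin n)) (α : Type*) :
    {F : Fin n → α // ∀ x, F (σ x) = F x} ≃ (Q σ → α) where
  toFun := fun F => Quotient.lift F.1 fun x y h => sameCycle_const F.2 h
  invFun G := ⟨fun x => G (Quotient.mk (scSetoid σ) x), fun x =>
    congrArg G (Quotient.sound (sameCycle_apply_left.2 (SameCycle.refl σ x)))⟩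
  left_inv F := rfl
  right_inv G := funext (Quotient.ind fun x => rfl)

lemma card_fix (σ : Perm (Fin n)) (m : ℕ) :
    Fintype.card {F : Fin n → Fin m // ∀ x, F (σ x) = F x} = m ^ cc σ := by
  rw [Fintype.card_congr (fixEquiv σ (Fin m)), Fintype.card_fun, Fintype.card_fin, card_Q]

/-! ### Linear algebra: rank of `ρ σ - 1` is `n - cc σ` -/

def rho (σ : Perm (Fin n)) : (Fin n → ℝ) →ₗ[ℝ] (Fin n → ℝ) :=
  LinearMap.funLeft ℝ ℝ ⇑σ⁻¹

def Dmap (σ : Perm (Fin n)) : (Fin n → ℝ) →ₗ[ℝ] (Fin n → ℝ) :=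
  rho σ - LinearMap.id

lemma mem_ker_Dmap_iff {σ : Perm (Fin n)} {F : Fin n → ℝ} :
    F ∈ LinearMap.ker (Dmap σ) ↔ ∀ x, F (σ x) = F x := by
  simp only [Dmap, LinearMap.mem_ker, LinearMap.sub_apply, LinearMap.id_apply, sub_eq_zero]
  constructor
  · intro h x
    have := congrFun h (σ x)
    simp only [rho, LinearMap.funLeft_apply, Perm.coe_inv, Equiv.symm_apply_apply] at this
    exact this.symm
  · intro h
    funext y
    have := h (σ⁻¹ y)
    rw [Perm.coe_inv, Equiv.apply_symm_apply] at this
    simpa [rho] using this.symm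

noncomputable def fixLequiv (σ : Perm (Fin n)) : (Q σ → ℝ) ≃ₗ[ℝ] LinearMap.ker (Dmap σ) where
  toFun G := ⟨fun x => G (Quotient.mk (scSetoid σ) x), mem_ker_Dmap_iff.2 fun x =>
    congrArg G (Quotient.sound (sameCycle_apply_left.2 (SameCycle.refl σ x)))⟩
  map_add' _ _ := rfl
  map_smul' _ _ := rfl
  invFun F := Quotient.lift F.1 fun x y h => sameCycle_const (mem_ker_Dmap_iff.1 F.2) h
  left_inv G := funext (Quotient.ind fun x => rfl)
  right_inv F := rfl

lemma finrank_ker_Dmap (σ : Perm (Fin n)) :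
    Module.finrank ℝ (LinearMap.ker (Dmap σ)) = cc σ := by
  rw [← (fixLequiv σ).finrank_eq, Module.finrank_fintype_fun_eq_card, card_Q]

lemma finrank_range_Dmap (σ : Perm (Fin n)) :
    Module.finrank ℝ (LinearMap.range (Dmap σ)) = n - cc σ := by
  have h := LinearMap.finrank_range_add_finrank_ker (Dmap σ)
  rw [finrank_ker_Dmap, Module.finrank_fintype_fun_eq_card, Fintype.card_fin] at h
  have := cc_le σ
  omega

lemma Dmap_mul (σ τ : Perm (Fin n)) : Dmap (σ * τ) = rho σ ∘ₗ Dmap τ + Dmap σ := by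
  refine LinearMap.ext fun F => funext fun y => ?_
  simp only [Dmap, rho, LinearMap.sub_apply, LinearMap.add_apply, LinearMap.comp_apply,
    LinearMap.funLeft_apply, LinearMap.id_apply, mul_inv_rev, Perm.mul_apply, Pi.sub_apply,
    Pi.add_apply]
  ring

lemma rank_Dmap_mul_le (σ τ : Perm (Fin n)) :
    Module.finrank ℝ (LinearMap.range (Dmap (σ * τ)))
      ≤ Module.finrank ℝ (LinearMap.range (Dmap σ))
        + Module.finrank ℝ (LinearMap.range (Dmap τ)) := by
  rw [Dmap_mul]
  have hle : LinearMap.range (rho σ ∘ₗ Dmap τ + Dmap σ)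
      ≤ LinearMap.range (rho σ ∘ₗ Dmap τ) ⊔ LinearMap.range (Dmap σ) := by
    rintro _ ⟨F, rfl⟩
    exact Submodule.mem_sup.2 ⟨_, ⟨F, rfl⟩, _, ⟨F, rfl⟩, rfl⟩
  refine le_trans (Submodule.finrank_mono hle) ?_
  refine le_trans (Submodule.finrank_add_le_finrank_add_finrank _ _) ?_
  have hcomp : Module.finrank ℝ (LinearMap.range (rho σ ∘ₗ Dmap τ))
      ≤ Module.finrank ℝ (LinearMap.range (Dmap τ)) := by
    rw [LinearMap.range_comp]
    exact Submodule.finrank_map_le _ _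
  omega

lemma cc_swap {a b : Fin n} (h : a ≠ b) : cc (swap a b) = n - 1 := by
  have h2 : (swap a b).support.card = 2 := card_support_swap h
  have hn : 2 ≤ n := by
    have := Finset.card_le_univ (swap a b).support
    rw [h2] at this
    rwa [Fintype.card_fin] at this
  have hct : (swap a b).cycleType = {2} := by
    rw [(isCycle_swap h).cycleType, h2]
  unfold cc cycleMu
  rw [Multiset.card_add, Multiset.card_replicate, hct]
  simp only [Multiset.card_singleton, Multiset.sum_singleton]
  omega


lemma cc_one : cc (1 : Perm (Fin n)) = n := by
  unfold cc cycleMu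
  simp [cycleType_one]

lemma rank_le_of_swaps (L : List (Perm (Fin n))) (h : ∀ τ ∈ L, IsSwap τ) :
    Module.finrank ℝ (LinearMap.range (Dmap L.prod)) ≤ L.length := by
  induction L with
  | nil =>
    rw [List.prod_nil, List.length_nil]
    rw [finrank_range_Dmap, cc_one]
    omega
  | cons τ L ih =>
    rw [List.prod_cons, List.length_cons]
    have h1 := rank_Dmap_mul_le τ L.prod
    have h2 : Module.finrank ℝ (LinearMap.range (Dmap τ)) ≤ 1 := by
      obtain ⟨a, b, hab, rfl⟩ := h τ List.mem_cons_self
      rw [finrank_range_Dmap, cc_swap hab]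
      omega
    have h3 := ih fun τ' hτ' => h τ' (List.mem_cons_of_mem _ hτ')
    omega

lemma lower_bound (σ : Perm (Fin n)) (L : List (Perm (Fin n))) (h : ∀ τ ∈ L, IsSwap τ)
    (hp : L.prod = σ) : n - cc σ ≤ L.length := by
  have := rank_le_of_swaps L h
  rwa [hp, finrank_range_Dmap] at this

lemma cc_lt_swap_mul {σ : Perm (Fin n)} {x : Fin n} (hx : σ x ≠ x) :
    cc σ < cc (swap x (σ x) * σ) := by
  set σ' := swap x (σ x) * σ with hσ'
  have hfix : σ' x = x := by rw [hσ', Perm.mul_apply, swap_apply_right]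
  have hlt : LinearMap.ker (Dmap σ) < LinearMap.ker (Dmap σ') := by
    refine SetLike.lt_iff_le_and_exists.2 ⟨?_, Pi.single x 1, ?_, ?_⟩
    · intro F hF
      rw [mem_ker_Dmap_iff] at hF ⊢
      intro y
      have hswap : ∀ z, F (swap x (σ x) z) = F z := by
        intro z
        rcases eq_or_ne z x with rfl | hzx
        · rw [swap_apply_left]; exact hF z
        rcases eq_or_ne z (σ x) with rfl | hzs
        · rw [swap_apply_right]; exact (hF x).symm
        · rw [swap_apply_of_ne_of_ne hzx hzs]
      rw [hσ', Perm.mul_apply, hswap, hF]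
    · rw [mem_ker_Dmap_iff]
      intro y
      rcases eq_or_ne y x with rfl | hyx
      · rw [hfix]
      · have hne : σ' y ≠ x := fun hc => hyx (σ'.injective (by rw [hc, hfix]))
        rw [Pi.single_eq_of_ne hne, Pi.single_eq_of_ne hyx]
    · rw [mem_ker_Dmap_iff]
      push_neg
      exact ⟨x, by rw [Pi.single_eq_of_ne hx, Pi.single_eq_same]; exact zero_ne_one⟩
  have := Submodule.finrank_lt_finrank_of_lt hlt
  rwa [finrank_ker_Dmap, finrank_ker_Dmap] at this

/-! ### The Cayley graph -/

lemma isSwap_inv {σ : Perm (Fin n)} (h : IsSwap σ) : IsSwap σ⁻¹ := by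
  obtain ⟨a, b, hab, rfl⟩ := h
  exact ⟨a, b, hab, by rw [swap_inv]⟩

lemma cayley_adj {g h : Perm (Fin n)} :
    (cayleyGraph n).Adj g h ↔ IsSwap (g * h⁻¹) := by
  rw [cayleyGraph, SimpleGraph.fromRel_adj]
  constructor
  · rintro ⟨hne, hs | hs⟩
    · exact hs
    · have := isSwap_inv hs
      rwa [mul_inv_rev, inv_inv] at this
  · intro hs
    refine ⟨?_, Or.inl hs⟩
    rintro rfl
    rw [mul_inv_cancel] at hs
    obtain ⟨a, b, hab, hsw⟩ := hs
    exact hab (swap_eq_one_iff.1 hsw.symm)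

lemma walk_swaps {g h : Perm (Fin n)} (w : (cayleyGraph n).Walk g h) :
    ∃ L : List (Perm (Fin n)), (∀ τ ∈ L, IsSwap τ) ∧ L.length = w.length ∧ L.prod = g * h⁻¹ := by
  induction w with
  | nil => exact ⟨[], by simp, by simp, by simp⟩
  | @cons u v w' hadj p ih =>
    obtain ⟨L, hL, hlen, hprod⟩ := ih
    refine ⟨(u * v⁻¹) :: L, ?_, by simp [hlen], ?_⟩
    · intro τ hτ
      rcases List.mem_cons.1 hτ with rfl | hτ'
      · exact cayley_adj.1 hadj
      · exact hL τ hτ'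
    · rw [List.prod_cons, hprod]
      group

lemma reachable_and_dist_le : ∀ (k : ℕ) (g h : Perm (Fin n)), (g * h⁻¹).support.card ≤ k →
    (cayleyGraph n).Reachable g h ∧ (cayleyGraph n).dist g h ≤ n - cc (g * h⁻¹) := by
  intro k
  induction k with
  | zero =>
    intro g h hle
    have hσ : g * h⁻¹ = 1 := by
      rw [← support_eq_empty_iff]
      exact Finset.card_eq_zero.1 (Nat.le_zero.1 hle)
    have : g = h := by
      have := congrArg (· * h) hσ
      simpa [mul_assoc] using this
    subst this
    exact ⟨SimpleGraph.Reachable.refl g, by rw [SimpleGraph.dist_self]; exact Nat.zero_le _⟩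
  | succ k ih =>
    intro g h hle
    by_cases hgh : g = h
    · subst hgh
      exact ⟨SimpleGraph.Reachable.refl g, by rw [SimpleGraph.dist_self]; exact Nat.zero_le _⟩
    · set σ := g * h⁻¹ with hσdef
      have hσ1 : σ ≠ 1 := fun hc => hgh (by
        have := congrArg (· * h) hc
        simpa [hσdef, mul_assoc] using this)
      obtain ⟨x, hx⟩ : ∃ x, σ x ≠ x := by
        by_contra hc
        push_neg at hc
        exact hσ1 (Equiv.ext fun y => by rw [hc y]; rfl)
      set g' := swap x (σ x) * g with hg'
      have hσ' : g' * h⁻¹ = swap x (σ x) * σ := by rw [hg', hσdef, mul_assoc]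
      have hcard : (swap x (σ x) * σ).support.card < σ.support.card :=
        card_support_swap_mul hx
      have hIH := ih g' h (by rw [hσ']; omega)
      have hadj : (cayleyGraph n).Adj g g' := by
        refine cayley_adj.2 ?_
        have : g * g'⁻¹ = swap x (σ x) := by
          rw [hg', mul_inv_rev, ← mul_assoc, mul_inv_cancel, one_mul, swap_inv]
        rw [this]
        exact ⟨x, σ x, Ne.symm hx, rfl⟩
      refine ⟨hadj.reachable.trans hIH.1, ?_⟩
      obtain ⟨p, hp⟩ := hIH.1.exists_walk_length_eq_dist
      have hdle := SimpleGraph.dist_le (SimpleGraph.Walk.cons hadj p)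
      rw [SimpleGraph.Walk.length_cons, hp] at hdle
      have hlt : cc σ < cc (g' * h⁻¹) := hσ' ▸ cc_lt_swap_mul hx
      have hle2 := cc_le (g' * h⁻¹)
      have hd2 := hIH.2
      omega

lemma dist_eq (g h : Perm (Fin n)) : (cayleyGraph n).dist g h = n - cc (g * h⁻¹) := by
  obtain ⟨hr, hle⟩ := reachable_and_dist_le ((g * h⁻¹).support.card) g h le_rfl
  refine le_antisymm hle ?_
  obtain ⟨p, hp⟩ := hr.exists_walk_length_eq_dist
  obtain ⟨L, hL, hlen, hprod⟩ := walk_swaps p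
  have := lower_bound _ L hL hprod
  omega


lemma pow_helper {m : ℕ} (hm : 0 < m) (c k : ℕ) (hc : c ≤ k) :
    ((m : ℝ))⁻¹ ^ (k - c) = (m : ℝ) ^ c / (m : ℝ) ^ k := by
  have hm' : (m : ℝ) ≠ 0 := Nat.cast_ne_zero.2 hm.ne'
  rw [inv_pow, eq_div_iff (pow_ne_zero _ hm'), inv_mul_eq_iff_eq_mul₀ (pow_ne_zero _ hm'),
    ← pow_add]
  congr 1
  omega

lemma exp_eq_pow {m : ℕ} (hm : 0 < m) (k : ℕ) :
    Real.exp (-(Real.log m) * (k : ℝ)) = ((m : ℝ))⁻¹ ^ k := by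
  rw [mul_comm, Real.exp_nat_mul, Real.exp_neg, Real.exp_log (by exact_mod_cast hm)]

lemma psk_ones (m : ℕ) (g h : Perm (Fin n)) :
    powerSumKernel (fun _ : Fin m => (1 : ℝ)) g h
      = (m : ℝ) ^ Multiset.card (cycleMu (g * h⁻¹)) := by
  unfold powerSumKernel
  have h1 : ((cycleMu (g * h⁻¹)).map fun d => ∑ _i : Fin m, (1 : ℝ) ^ d)
      = (cycleMu (g * h⁻¹)).map fun _ => (m : ℝ) := by
    refine Multiset.map_congr rfl fun d _ => ?_
    simp
  rw [h1, Multiset.map_const', Multiset.prod_replicate]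

lemma card_subtype_sum {β : Type*} [Fintype β] (p : β → Prop) [DecidablePred p] :
    ((Fintype.card {x // p x} : ℝ)) = ∑ x : β, if p x then (1 : ℝ) else 0 := by
  rw [Fintype.card_subtype, Finset.card_filter]
  push_cast
  rfl

lemma sq_expand {ι κ : Type*} [Fintype ι] [Fintype κ] [DecidableEq κ] (c : ι → κ) (a : ι → ℝ) :
    ∑ i, ∑ j, a i * a j * (if c i = c j then (1 : ℝ) else 0)
      = ∑ u : κ, (∑ i, if c i = u then a i else 0) ^ 2 := by
  have hpt : ∀ i j : ι, ∑ u : κ, (if c i = u then a i else 0) * (if c j = u then a j else 0)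
      = a i * a j * (if c i = c j then (1 : ℝ) else 0) := by
    intro i j
    rw [Finset.sum_eq_single (c i)]
    · by_cases h : c i = c j
      · simp [h]
      · simp [h, Ne.symm h]
    · intro u _ hu
      rw [if_neg fun hh => hu hh.symm, zero_mul]
    · intro h
      exact absurd (Finset.mem_univ _) h
  calc ∑ i, ∑ j, a i * a j * (if c i = c j then (1 : ℝ) else 0)
      = ∑ i, ∑ j, ∑ u : κ, (if c i = u then a i else 0) * (if c j = u then a j else 0) :=
        Finset.sum_congr rfl fun i _ => Finset.sum_congr rfl fun j _ => (hpt i j).symm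
    _ = ∑ i, ∑ u : κ, ∑ j, (if c i = u then a i else 0) * (if c j = u then a j else 0) :=
        Finset.sum_congr rfl fun i _ => Finset.sum_comm
    _ = ∑ u : κ, ∑ i, ∑ j, (if c i = u then a i else 0) * (if c j = u then a j else 0) :=
        Finset.sum_comm
    _ = ∑ u : κ, (∑ i, if c i = u then a i else 0) ^ 2 := by
        refine Finset.sum_congr rfl fun u _ => ?_
        rw [sq, Finset.sum_mul_sum]

end PSKaux

open PSKaux in
theorem powerSumKernel_ones_cayley {n m : ℕ} (hm : 0 < m) :
    (∀ g h : Equiv.Perm (Fin n),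
      powerSumKernel (fun _ : Fin m => (1 : ℝ)) g h
        = (m : ℝ) ^ Multiset.card (cycleMu (g * h⁻¹)) ∧
      powerSumKernel (fun _ : Fin m => (1 : ℝ)) g h
        = (m : ℝ) ^ n * Real.exp (-(Real.log m) * (cayleyGraph n).dist g h)) ∧
    ∀ (N : ℕ) (g : Fin N → Equiv.Perm (Fin n)) (a : Fin N → ℝ),
      0 ≤ ∑ i, ∑ j,
        a i * a j * Real.exp (-(Real.log m) * (cayleyGraph n).dist (g i) (g j)) := by
  have hm' : (0 : ℝ) < m := by exact_mod_cast hm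
  have hmn : ((m : ℝ)) ^ n ≠ 0 := pow_ne_zero _ hm'.ne'
  have hexp : ∀ g h : Perm (Fin n),
      Real.exp (-(Real.log m) * (cayleyGraph n).dist g h)
        = (m : ℝ) ^ cc (g * h⁻¹) / (m : ℝ) ^ n := by
    intro g h
    rw [dist_eq, exp_eq_pow hm, pow_helper hm _ _ (cc_le _)]
  constructor
  · intro g h
    refine ⟨psk_ones m g h, ?_⟩
    rw [psk_ones m g h, hexp g h, mul_div_cancel₀ _ hmn]
    rfl
  · intro N g a
    have hcard : ∀ i j : Fin N,
        ((m : ℝ)) ^ cc (g i * (g j)⁻¹)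
          = ∑ F : Fin n → Fin m,
              if (fun y => F (g i y)) = (fun y => F (g j y)) then (1 : ℝ) else 0 := by
      intro i j
      have h0 : ((m : ℝ)) ^ cc (g i * (g j)⁻¹)
          = ((Fintype.card {F : Fin n → Fin m // ∀ x, F ((g i * (g j)⁻¹) x) = F x} : ℕ) : ℝ) := by
        rw [card_fix]
        push_cast
        ring
      rw [h0]
      rw [show Fintype.card {F : Fin n → Fin m // ∀ x, F ((g i * (g j)⁻¹) x) = F x}
            = Fintype.card {F : Fin n → Fin m //
                (fun y => F (g i y)) = (fun y => F (g j y))} from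
        Fintype.card_congr (Equiv.subtypeEquivRight fun F => by
          rw [funext_iff]
          constructor
          · intro hf y
            have := hf (g j y)
            rwa [Perm.mul_apply, Perm.coe_inv, Equiv.symm_apply_apply] at this
          · intro hf x
            have := hf ((g j)⁻¹ x)
            rwa [Perm.coe_inv, Equiv.apply_symm_apply] at this)]
      exact card_subtype_sum _
    calc ∑ i, ∑ j, a i * a j * Real.exp (-(Real.log m) * (cayleyGraph n).dist (g i) (g j))
        = ∑ i, ∑ j, (∑ F : Fin n → Fin m, a i * a j *
            if (fun y => F (g i y)) = (fun y => F (g j y)) then (1 : ℝ) else 0) / (m : ℝ) ^ n := by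
          refine Finset.sum_congr rfl fun i _ => Finset.sum_congr rfl fun j _ => ?_
          rw [hexp, hcard, ← mul_div_assoc, Finset.mul_sum]
      _ = (∑ F : Fin n → Fin m, ∑ u : Fin n → Fin m,
            (∑ i, if (fun y => F (g i y)) = u then a i else 0) ^ 2) / (m : ℝ) ^ n := by
          have hnum : ∑ i, ∑ j, (∑ F : Fin n → Fin m, a i * a j *
              if (fun y => F (g i y)) = (fun y => F (g j y)) then (1 : ℝ) else 0)
              = ∑ F : Fin n → Fin m, ∑ u : Fin n → Fin m,
                  (∑ i, if (fun y => F (g i y)) = u then a i else 0) ^ 2 := by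
            calc ∑ i, ∑ j, (∑ F : Fin n → Fin m, a i * a j *
                if (fun y => F (g i y)) = (fun y => F (g j y)) then (1 : ℝ) else 0)
                = ∑ i, ∑ F : Fin n → Fin m, ∑ j, a i * a j *
                  if (fun y => F (g i y)) = (fun y => F (g j y)) then (1 : ℝ) else 0 :=
                  Finset.sum_congr rfl fun i _ => Finset.sum_comm
              _ = ∑ F : Fin n → Fin m, ∑ i, ∑ j, a i * a j *
                  if (fun y => F (g i y)) = (fun y => F (g j y)) then (1 : ℝ) else 0 :=
                  Finset.sum_comm
              _ = _ := Finset.sum_congr rfl fun F _ => sq_expand (fun i => fun y => F (g i y)) a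
          simp only [← Finset.sum_div]
          rw [hnum]
      _ ≥ 0 := by
          apply div_nonneg _ (le_of_lt (pow_pos hm' n))
          exact Finset.sum_nonneg fun F _ => Finset.sum_nonneg fun u _ => sq_nonneg _
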